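/- For the full shift σ on Σ_k = {1,...,k}^ℤ (k ≥ 2) and any real number r with 0 < r < log k, there exists a closed σ-invariant subset Λ_r ⊆ Σ_k such that the topological entropy of σ restricted to Λ_r equals r. -/

import Mathlib

open Dynamics

/-- The discrete uniformity on `Fin k`. -/
instance (k : ℕ) : UniformSpace (Fin k) := ⊥

/-- The shift map on the full two-sided shift over `k` symbols. -/
def fullShift (k : ℕ) : (ℤ → Fin k) → (ℤ → Fin k) := fun x n => x (n + 1)

set_option linter.unusedSectionVars false
set_option maxHeartbeats 1000000

namespace SubshiftIVT

noncomputable section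

variable (k : ℕ) (r : ℝ)

def scm (i : ℕ) : ℕ := i + 2

def scLN : ℕ → ℕ × ℕ
  | 0 => (1, k)
  | i+1 =>
    let L := (scLN i).1
    let N := (scLN i).2
    (scm i * L, N ^ (⌊((scm i : ℝ) * L * r) / Real.log N⌋₊ + 1))

def scL (i : ℕ) : ℕ := (scLN k r i).1
def scN (i : ℕ) : ℕ := (scLN k r i).2
def scf (i : ℕ) : ℕ := ⌊((scm i : ℝ) * scL k r i * r) / Real.log (scN k r i)⌋₊ + 1

/-- per-symbol entropy at scale i -/
def sch (i : ℕ) : ℝ := Real.log (scN k r i) / scL k r i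

lemma scL_zero : scL k r 0 = 1 := rfl
lemma scN_zero : scN k r 0 = k := rfl
lemma scL_succ (i : ℕ) : scL k r (i+1) = scm i * scL k r i := rfl
lemma scN_succ (i : ℕ) : scN k r (i+1) = scN k r i ^ scf k r i := rfl

variable {k r} (hk : 2 ≤ k) (hr0 : 0 < r) (hrk : r < Real.log k)

include hk hr0 hrk

lemma scL_pos (i : ℕ) : 0 < scL k r i := by
  induction i with
  | zero => norm_num [scL_zero]
  | succ i ih => rw [scL_succ]; exact Nat.mul_pos (Nat.succ_pos _) ih

lemma scN_two_le (i : ℕ) : 2 ≤ scN k r i := by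
  induction i with
  | zero => simpa [scN_zero] using hk
  | succ i ih =>
    rw [scN_succ]
    calc (2:ℕ) ≤ scN k r i := ih
    _ = scN k r i ^ 1 := (pow_one _).symm
    _ ≤ scN k r i ^ scf k r i := Nat.pow_le_pow_right (by omega) (by simp [scf])

lemma logN_pos (i : ℕ) : (0:ℝ) < Real.log (scN k r i) := by
  apply Real.log_pos
  have := scN_two_le hk hr0 hrk i
  exact_mod_cast by omega

lemma key_lt (i : ℕ) : r * scL k r i < Real.log (scN k r i) := by
  induction i with
  | zero =>
    simpa [scL_zero, scN_zero] using hrk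
  | succ i ih =>
    have hL : (0:ℝ) < scL k r i := by exact_mod_cast scL_pos hk hr0 hrk i
    have hlogN : (0:ℝ) < Real.log (scN k r i) := logN_pos hk hr0 hrk i
    rw [scN_succ, scL_succ]
    push_cast
    rw [Real.log_pow]
    push_cast
    have hx : ((scm i : ℝ) * scL k r i * r) / Real.log (scN k r i) <
        (scf k r i : ℝ) := by
      have := Nat.lt_floor_add_one (((scm i : ℝ) * scL k r i * r) / Real.log (scN k r i))
      calc ((scm i : ℝ) * scL k r i * r) / Real.log (scN k r i)
          < (⌊((scm i : ℝ) * scL k r i * r) / Real.log (scN k r i)⌋₊ : ℝ) + 1 := this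
        _ = (scf k r i : ℝ) := by rw [scf]; push_cast; ring
    have := (div_lt_iff₀ hlogN).1 hx
    nlinarith [this]

lemma r_lt_sch (i : ℕ) : r < sch k r i := by
  have hL : (0:ℝ) < scL k r i := by exact_mod_cast scL_pos hk hr0 hrk i
  rw [sch, lt_div_iff₀ hL]
  linarith [key_lt hk hr0 hrk i]

lemma scf_le_scm (i : ℕ) : scf k r i ≤ scm i := by
  have hL : (0:ℝ) < scL k r i := by exact_mod_cast scL_pos hk hr0 hrk i
  have hlogN := logN_pos hk hr0 hrk i
  have hm : (0:ℕ) < scm i := by simp [scm]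
  have hx : ((scm i : ℝ) * scL k r i * r) / Real.log (scN k r i) < scm i := by
    rw [div_lt_iff₀ hlogN]
    have := key_lt hk hr0 hrk i
    have hmr : (0:ℝ) < (scm i : ℝ) := by exact_mod_cast hm
    nlinarith
  have : ⌊((scm i : ℝ) * scL k r i * r) / Real.log (scN k r i)⌋₊ < scm i := by
    exact Nat.floor_lt (by positivity) |>.2 (by exact_mod_cast hx)
  rw [scf]; omega

lemma sch_succ_le (i : ℕ) : sch k r (i+1) ≤ r + sch k r i / scm i := by
  have hL : (0:ℝ) < scL k r i := by exact_mod_cast scL_pos hk hr0 hrk i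
  have hlogN := logN_pos hk hr0 hrk i
  have hm : (0:ℝ) < (scm i : ℝ) := by simp [scm]; positivity
  have hfloor : (⌊((scm i : ℝ) * scL k r i * r) / Real.log (scN k r i)⌋₊ : ℝ) ≤
      ((scm i : ℝ) * scL k r i * r) / Real.log (scN k r i) :=
    Nat.floor_le (by positivity)
  have hf : (scf k r i : ℝ) * Real.log (scN k r i) ≤
      (scm i : ℝ) * scL k r i * r + Real.log (scN k r i) := by
    rw [scf]; push_cast
    rw [add_mul, one_mul]
    have := mul_le_mul_of_nonneg_right hfloor (le_of_lt hlogN)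
    rw [div_mul_cancel₀ _ (ne_of_gt hlogN)] at this
    linarith
  rw [sch, sch, scN_succ, scL_succ]
  push_cast
  rw [Real.log_pow]
  rw [div_le_iff₀ (by positivity)]
  have hexp : (r + Real.log (scN k r i) / (scL k r i : ℝ) / (scm i : ℝ)) * ((scm i : ℝ) * (scL k r i : ℝ))
      = (scm i : ℝ) * (scL k r i : ℝ) * r + Real.log (scN k r i) := by
    field_simp
  push_cast
  rw [hexp]
  exact hf

lemma sch_le_logk (i : ℕ) : sch k r i ≤ Real.log k := by
  induction i with
  | zero => simp [sch, scL_zero, scN_zero]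
  | succ i ih =>
    have hL : (0:ℝ) < scL k r i := by exact_mod_cast scL_pos hk hr0 hrk i
    have hlogN := logN_pos hk hr0 hrk i
    have hm : (0:ℝ) < (scm i : ℝ) := by simp [scm]; positivity
    have hfm : (scf k r i : ℝ) ≤ (scm i : ℝ) := by exact_mod_cast scf_le_scm hk hr0 hrk i
    have : sch k r (i+1) ≤ sch k r i := by
      rw [sch, sch, scN_succ, scL_succ]
      push_cast
      rw [Real.log_pow]
      push_cast
      rw [div_le_div_iff₀ (by positivity) (by positivity)]
      have h1 : (scf k r i : ℝ) * Real.log (scN k r i) * scL k r i ≤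
          (scm i : ℝ) * Real.log (scN k r i) * scL k r i :=
        mul_le_mul_of_nonneg_right (mul_le_mul_of_nonneg_right hfm hlogN.le) hL.le
      nlinarith [h1]
    linarith

lemma exists_sch_small {ε : ℝ} (hε : 0 < ε) : ∃ i, sch k r i < r + ε := by
  obtain ⟨j, hj⟩ := exists_nat_gt (Real.log k / ε)
  refine ⟨j + 1, ?_⟩
  have h1 := sch_succ_le hk hr0 hrk j
  have h2 := sch_le_logk hk hr0 hrk j
  have hm : (j:ℝ) + 2 = (scm j : ℝ) := by simp [scm]
  have hmpos : (0:ℝ) < (scm j : ℝ) := by rw [← hm]; positivity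
  have hlogk : (0:ℝ) < Real.log k := lt_trans hr0 hrk
  have : sch k r j / scm j < ε := by
    rw [div_lt_iff₀ hmpos]
    have : Real.log k / ε < (scm j : ℝ) := by rw [← hm]; push_cast; linarith
    have := (div_lt_iff₀ hε).1 this
    linarith
  linarith

omit hk hr0 hrk

variable (k r)

instance : DiscreteTopology (Fin k) := ⟨rfl⟩

lemma scL_pos' (i : ℕ) : 0 < scL k r i := by
  induction i with
  | zero => norm_num [scL_zero]
  | succ i ih => rw [scL_succ]; exact Nat.mul_pos (Nat.succ_pos _) ih

lemma scf_pos (i : ℕ) : 0 < scf k r i := Nat.succ_pos _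

/-- allowed block content at scale `i`, read in the window `[0, scL k r i)` of `y` -/
def BlkP : ℕ → (ℤ → Fin k) → Prop
  | 0 => fun _ => True
  | i+1 => fun y =>
      (∀ b : ℕ, b < scm i → BlkP i (fun n => y (b * scL k r i + n))) ∧
      (∀ b : ℕ, scf k r i ≤ b → b < scm i → ∀ s : ℕ, s < scL k r i →
        y (b * scL k r i + s) = y (((scf k r i - 1 : ℕ) : ℤ) * scL k r i + s))

/-- the `i`-th approximating subshift: concatenations of allowed scale-`i` blocks -/
def XX (i : ℕ) : Set (ℤ → Fin k) :=
  { x | ∃ p : ℤ, 0 ≤ p ∧ p < scL k r i ∧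
      ∀ q : ℤ, BlkP k r i (fun n => x (p + q * scL k r i + n)) }

/-- the subshift realizing entropy `r` -/
def Lam : Set (ℤ → Fin k) := ⋂ i, XX k r i

variable {k r}

lemma nat_block_lt {b s L m : ℕ} (hb : b < m) (hs : s < L) : b * L + s < m * L := by
  calc b * L + s < b * L + L := by omega
  _ = (b+1) * L := by ring
  _ ≤ m * L := Nat.mul_le_mul_right L hb

lemma blkP_congr (i : ℕ) {y z : ℤ → Fin k}
    (h : ∀ s : ℕ, s < scL k r i → y (s : ℤ) = z (s : ℤ)) :
    BlkP k r i y ↔ BlkP k r i z := by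
  induction i generalizing y z with
  | zero => simp [BlkP]
  | succ i ih =>
    have hsub : ∀ b : ℕ, b < scm i → ∀ s : ℕ, s < scL k r i →
        y ((b : ℤ) * scL k r i + s) = z ((b : ℤ) * scL k r i + s) := by
      intro b hb s hs
      have := h (b * scL k r i + s) (by rw [scL_succ]; exact nat_block_lt hb hs)
      push_cast at this
      exact this
    simp only [BlkP]
    constructor
    · rintro ⟨h1, h2⟩
      refine ⟨fun b hb => ?_, fun b hfb hb s hs => ?_⟩
      · exact (ih (fun s hs => hsub b hb s hs)).1 (h1 b hb)
      · have hf1 : scf k r i - 1 < scm i := by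
          have := scf_pos (k := k) (r := r) i; omega
        rw [← hsub b hb s hs, ← hsub (scf k r i - 1) hf1 s hs]
        exact h2 b hfb hb s hs
    · rintro ⟨h1, h2⟩
      refine ⟨fun b hb => ?_, fun b hfb hb s hs => ?_⟩
      · exact (ih (fun s hs => hsub b hb s hs)).2 (h1 b hb)
      · have hf1 : scf k r i - 1 < scm i := by
          have := scf_pos (k := k) (r := r) i; omega
        rw [hsub b hb s hs, hsub (scf k r i - 1) hf1 s hs]
        exact h2 b hfb hb s hs

/-- restriction of a two-sided sequence to a window -/
def proj (c : ℤ) (L : ℕ) (x : ℤ → Fin k) : Fin L → Fin k := fun j => x (c + j)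

/-- extension of a finite word to a two-sided sequence (garbage outside) -/
def ext {L : ℕ} (hL : 0 < L) (w : Fin L → Fin k) : ℤ → Fin k :=
  fun n => if h : 0 ≤ n ∧ n < L then w ⟨n.toNat, by omega⟩ else w ⟨0, hL⟩

lemma continuous_proj (c : ℤ) (L : ℕ) : Continuous (proj (k := k) c L) :=
  continuous_pi fun j => continuous_apply (c + (j : ℤ))

lemma ext_proj (c : ℤ) {L : ℕ} (hL : 0 < L) (x : ℤ → Fin k) (s : ℕ) (hs : s < L) :
    ext hL (proj c L x) (s : ℤ) = x (c + s) := by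
  have h : (0 : ℤ) ≤ (s:ℤ) ∧ (s:ℤ) < L := by constructor <;> omega
  simp only [ext, dif_pos h, proj]
  congr 1

lemma blkP_window (i : ℕ) (c : ℤ) (x : ℤ → Fin k) :
    BlkP k r i (fun n => x (c + n)) ↔
      BlkP k r i (ext (scL_pos' k r i) (proj c (scL k r i) x)) := by
  apply blkP_congr
  intro s hs
  exact (ext_proj c (scL_pos' k r i) x s hs).symm

lemma isClosed_blkP_window (i : ℕ) (c : ℤ) :
    IsClosed { x : ℤ → Fin k | BlkP k r i (fun n => x (c + n)) } := by
  have : { x : ℤ → Fin k | BlkP k r i (fun n => x (c + n)) }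
      = proj c (scL k r i) ⁻¹' { w | BlkP k r i (ext (scL_pos' k r i) w) } := by
    ext x
    simp only [Set.mem_setOf_eq, Set.mem_preimage]
    exact blkP_window i c x
  rw [this]
  exact (isClosed_discrete _).preimage (continuous_proj c _)

lemma isClosed_XX (i : ℕ) : IsClosed (XX k r i) := by
  have : XX k r i = ⋃ p ∈ Set.Ico (0:ℤ) (scL k r i),
      ⋂ q : ℤ, { x : ℤ → Fin k | BlkP k r i (fun n => x (p + q * scL k r i + n)) } := by
    ext x
    simp only [XX, Set.mem_setOf_eq, Set.mem_iUnion, Set.mem_iInter, Set.mem_Ico,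
      Set.mem_setOf_eq, exists_prop]
    constructor
    · rintro ⟨p, h0, h1, h2⟩; exact ⟨p, ⟨h0, h1⟩, h2⟩
    · rintro ⟨p, ⟨h0, h1⟩, h2⟩; exact ⟨p, h0, h1, h2⟩
  rw [this]
  apply Set.Finite.isClosed_biUnion (Set.finite_Ico _ _)
  intro p _
  exact isClosed_iInter fun q => isClosed_blkP_window i _

lemma isClosed_Lam : IsClosed (Lam k r) := isClosed_iInter fun i => isClosed_XX i

/-- shifting by an arbitrary amount preserves `XX i` -/
lemma XX_shiftBy (i : ℕ) (a : ℤ) {x : ℤ → Fin k} (hx : x ∈ XX k r i) :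
    (fun n => x (n + a)) ∈ XX k r i := by
  obtain ⟨p, h0, h1, h2⟩ := hx
  set L : ℤ := (scL k r i : ℤ) with hLdef
  have hL : 0 < L := by rw [hLdef]; exact_mod_cast scL_pos' k r i
  refine ⟨(p - a) % L, Int.emod_nonneg _ (ne_of_gt hL), Int.emod_lt_of_pos _ hL, ?_⟩
  intro q
  have key : (p - a) % L + a + q * L = p + (q - (p - a) / L) * L := by
    have := Int.mul_ediv_add_emod (p - a) L
    linarith [this, mul_comm L ((p-a)/L)]
  have : (fun n => x ((p - a) % L + q * L + n + a)) =
      (fun n => x (p + (q - (p - a) / L) * L + n)) := by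
    funext n
    congr 1
    linarith [key]
  have h3 := h2 (q - (p - a) / L)
  rw [← this] at h3
  exact h3

lemma Lam_shiftBy (a : ℤ) {x : ℤ → Fin k} (hx : x ∈ Lam k r) :
    (fun n => x (n + a)) ∈ Lam k r := by
  simp only [Lam, Set.mem_iInter] at hx ⊢
  exact fun i => XX_shiftBy i a (hx i)

lemma scL_dvd {j i : ℕ} (h : j ≤ i) : scL k r j ∣ scL k r i := by
  induction i with
  | zero => rw [Nat.le_zero.1 h]
  | succ i ih =>
    rcases Nat.lt_or_ge j (i+1) with h' | h'
    · exact dvd_trans (ih (by omega)) (by rw [scL_succ]; exact dvd_mul_left _ _)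
    · have : j = i + 1 := by omega
      rw [this]

lemma blkP_sub {i j : ℕ} (h : j ≤ i) {y : ℤ → Fin k} (hy : BlkP k r i y)
    (a : ℕ) (ha : (a+1) * scL k r j ≤ scL k r i) :
    BlkP k r j (fun n => y ((a : ℤ) * (scL k r j : ℤ) + n)) := by
  induction i generalizing y a with
  | zero =>
    have hj : j = 0 := Nat.le_zero.1 h
    subst hj
    simp [BlkP]
  | succ i ih =>
    rcases Nat.lt_or_ge j (i+1) with h' | h'
    · -- j ≤ i
      have hji : j ≤ i := by omega
      obtain ⟨d, hd⟩ := scL_dvd (k := k) (r := r) hji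
      have hLj : 0 < scL k r j := scL_pos' k r j
      have hLi : 0 < scL k r i := scL_pos' k r i
      have hdpos : 0 < d := by
        rcases Nat.eq_zero_or_pos d with h0 | h0
        · rw [h0, Nat.mul_zero] at hd; omega
        · exact h0
      set b := a / d with hb
      set a' := a % d with ha'
      have hsplit : a = b * d + a' := by rw [hb, ha', Nat.mul_comm]; exact (Nat.div_add_mod a d).symm
      have ha'd : a' < d := Nat.mod_lt _ hdpos
      have hamd : a + 1 ≤ scm i * d := by
        have h1 : (a+1) * scL k r j ≤ scm i * d * scL k r j := by
          have : scm i * d * scL k r j = scm i * scL k r i := by rw [hd]; ring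
          rw [this]
          rw [scL_succ] at ha
          exact ha
        exact Nat.le_of_mul_le_mul_right h1 hLj
      have hbm : b < scm i := by
        rw [hb, Nat.div_lt_iff_lt_mul hdpos]
        exact Nat.lt_of_succ_le hamd
      obtain ⟨h1, _⟩ := hy
      have hyb := h1 b hbm
      have ha'' : (a' + 1) * scL k r j ≤ scL k r i := by
        rw [hd]
        calc (a'+1) * scL k r j ≤ d * scL k r j := Nat.mul_le_mul_right _ (by omega)
        _ = scL k r j * d := Nat.mul_comm _ _
      have hres := ih hji hyb a' ha''
      have heq : (fun n => y ((b : ℤ) * (scL k r i : ℤ) + ((a' : ℤ) * (scL k r j : ℤ) + n)))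
          = (fun n => y ((a : ℤ) * (scL k r j : ℤ) + n)) := by
        funext n
        congr 1
        have : (a : ℤ) = (b : ℤ) * d + a' := by exact_mod_cast hsplit
        rw [this]
        have : ((scL k r i : ℕ) : ℤ) = (scL k r j : ℤ) * d := by exact_mod_cast hd
        rw [this]
        ring
      rw [heq] at hres
      exact hres
    · have : j = i + 1 := by omega
      subst this
      have hL : 0 < scL k r (i+1) := scL_pos' k r (i+1)
      have ha0 : a = 0 := by nlinarith
      subst ha0
      simpa using hy

variable (k r) in
/-- periodization of `y` with period `scL k r i` -/
def per (i : ℕ) (y : ℤ → Fin k) : ℤ → Fin k :=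
  fun n => y (n % (scL k r i : ℤ))

lemma per_add_mul {i : ℕ} (y : ℤ → Fin k) {c : ℤ} (hc : (scL k r i : ℤ) ∣ c) (n : ℤ) :
    per k r i y (c + n) = per k r i y n := by
  obtain ⟨t, ht⟩ := hc
  simp only [per, ht]
  congr 1
  rw [add_comm, Int.add_mul_emod_self_left]

lemma per_eq_on {i : ℕ} (y : ℤ → Fin k) {n : ℤ} (h0 : 0 ≤ n) (h1 : n < scL k r i) :
    per k r i y n = y n := by
  simp only [per]
  congr 1
  exact Int.emod_eq_of_lt h0 h1

lemma blkP_per_ge {i : ℕ} {y : ℤ → Fin k} (hy : BlkP k r i y) :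
    ∀ j, i ≤ j → BlkP k r j (per k r i y) := by
  intro j hj
  induction j with
  | zero =>
    have : i = 0 := Nat.le_zero.1 hj
    simp [BlkP]
  | succ j ih =>
    rcases Nat.lt_or_ge i (j+1) with h' | h'
    · have hij : i ≤ j := by omega
      have hdvd : (scL k r i : ℤ) ∣ (scL k r j : ℤ) := by
        exact_mod_cast scL_dvd hij
      have hper := ih hij
      constructor
      · intro b hb
        have heq : (fun n => per k r i y ((b : ℤ) * (scL k r j : ℤ) + n)) = per k r i y := by
          funext n
          exact per_add_mul y (Dvd.dvd.mul_left hdvd _) n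
        rw [heq]
        exact hper
      · intro b hfb hb s hs
        have e1 : per k r i y ((b : ℤ) * (scL k r j : ℤ) + (s:ℤ)) = per k r i y s :=
          per_add_mul y (Dvd.dvd.mul_left hdvd _) _
        have e2 : per k r i y (((scf k r j - 1 : ℕ) : ℤ) * (scL k r j : ℤ) + (s:ℤ))
            = per k r i y s :=
          per_add_mul y (Dvd.dvd.mul_left hdvd _) _
        rw [e1, e2]
    · have : i = j + 1 := by omega
      subst this
      apply (blkP_congr (j+1) ?_).1 hy
      intro s hs
      exact (per_eq_on y (by positivity) (by exact_mod_cast hs)).symm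

lemma blkP_per_grid {i j : ℕ} (hj : j ≤ i) {y : ℤ → Fin k} (hy : BlkP k r i y) (q : ℤ) :
    BlkP k r j (fun n => per k r i y (q * (scL k r j : ℤ) + n)) := by
  obtain ⟨d, hd⟩ := scL_dvd (k := k) (r := r) hj
  have hLj : 0 < scL k r j := scL_pos' k r j
  have hLi : 0 < scL k r i := scL_pos' k r i
  have hdpos : 0 < d := by
    rcases Nat.eq_zero_or_pos d with h0 | h0
    · rw [h0, Nat.mul_zero] at hd; omega
    · exact h0
  set a : ℤ := q % (d : ℤ) with hadef
  have ha0 : 0 ≤ a := Int.emod_nonneg _ (by exact_mod_cast hdpos.ne')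
  have had : a < d := Int.emod_lt_of_pos _ (by exact_mod_cast hdpos)
  -- shift by (q - a) * Lj which is a multiple of Li
  have hdvd : (scL k r i : ℤ) ∣ (q - a) * (scL k r j : ℤ) := by
    have : (d : ℤ) ∣ (q - a) := Int.dvd_self_sub_of_emod_eq rfl
    obtain ⟨t, ht⟩ := this
    refine ⟨t, ?_⟩
    rw [ht, hd]
    push_cast
    ring
  have heq : (fun n => per k r i y (q * (scL k r j : ℤ) + n))
      = (fun n => per k r i y (a * (scL k r j : ℤ) + n)) := by
    funext n
    have : q * (scL k r j : ℤ) + n = (q - a) * (scL k r j : ℤ) + (a * (scL k r j : ℤ) + n) := by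
      ring
    rw [this, per_add_mul y hdvd]
  rw [heq]
  set a' : ℕ := a.toNat with ha'
  have haa : (a' : ℤ) = a := Int.toNat_of_nonneg ha0
  have ha'd : a' < d := by omega
  have hsub := blkP_sub hj hy a' (by
    rw [hd]
    calc (a'+1) * scL k r j ≤ d * scL k r j := Nat.mul_le_mul_right _ (by omega)
    _ = scL k r j * d := Nat.mul_comm _ _)
  apply (blkP_congr j ?_).2 hsub
  intro s hs
  have hrange0 : (0:ℤ) ≤ a * (scL k r j : ℤ) + s := by positivity
  have hrange1 : a * (scL k r j : ℤ) + s < scL k r i := by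
    have h1 : a * (scL k r j : ℤ) + s < (a + 1) * (scL k r j : ℤ) := by
      push_cast
      nlinarith [hs, (by exact_mod_cast hLj : (0:ℤ) < (scL k r j : ℤ))]
    have h2 : (a + 1) * (scL k r j : ℤ) ≤ (d : ℤ) * (scL k r j : ℤ) := by
      apply mul_le_mul_of_nonneg_right (by omega) (by positivity)
    have : ((scL k r i : ℕ) : ℤ) = (scL k r j : ℤ) * d := by exact_mod_cast hd
    rw [this]
    linarith [mul_comm (d:ℤ) ((scL k r j : ℤ))]
  rw [per_eq_on y hrange0 hrange1]
  congr 1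
  push_cast [haa]
  ring

lemma per_mem_Lam {i : ℕ} {y : ℤ → Fin k} (hy : BlkP k r i y) :
    per k r i y ∈ Lam k r := by
  simp only [Lam, Set.mem_iInter]
  intro j
  refine ⟨0, le_refl _, by exact_mod_cast scL_pos' k r j, ?_⟩
  intro q
  rcases le_or_gt j i with hj | hj
  · have := blkP_per_grid hj hy q
    apply (blkP_congr j ?_).2 this
    intro s hs
    congr 1
    ring
  · have hall := blkP_per_ge hy j (le_of_lt hj)
    have hdvd : (scL k r i : ℤ) ∣ q * (scL k r j : ℤ) :=
      Dvd.dvd.mul_left (by exact_mod_cast scL_dvd (le_of_lt hj)) _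
    have heq : (fun n => per k r i y (0 + q * (scL k r j : ℤ) + n)) = per k r i y := by
      funext n
      rw [zero_add]
      exact per_add_mul y hdvd n
    rw [heq]
    exact hall

variable (k r)

/-- set of words of length `n` that occur as initial windows of allowed scale-`i` blocks -/
def Prefs (i n : ℕ) : Set (Fin n → Fin k) := { w | ∃ y, BlkP k r i y ∧ proj 0 n y = w }

/-- concatenation of blocks of length `L`, clamped at index `f-1` (so blocks
`f-1, f, ...` are all equal to block `f-1`) -/
def concat' (L f : ℕ) (ys : ℕ → ℤ → Fin k) : ℤ → Fin k :=
  fun t => ys (min (t / (L:ℤ)).toNat (f - 1)) (t % (L:ℤ))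

variable {k r}

lemma proj_apply (c : ℤ) (L : ℕ) (x : ℤ → Fin k) (j : Fin L) : proj c L x j = x (c + j) := rfl

lemma concat_eval {L f : ℕ} (hL : 0 < L) (ys : ℕ → ℤ → Fin k) (b : ℕ) {s : ℤ}
    (h0 : 0 ≤ s) (h1 : s < L) :
    concat' k L f ys ((b:ℤ) * L + s) = ys (min b (f-1)) s := by
  have hr : (b:ℤ) * L + s = s + (b:ℤ) * L := by ring
  have hLZ : (0:ℤ) < (L:ℤ) := by exact_mod_cast hL
  have hdiv : ((b:ℤ) * L + s) / L = b := by
    rw [hr, Int.add_mul_ediv_right _ _ (ne_of_gt hLZ), Int.ediv_eq_zero_of_lt h0 h1, zero_add]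
  have hmod : ((b:ℤ) * L + s) % L = s := by
    rw [hr, Int.add_mul_emod_self_right, Int.emod_eq_of_lt h0 h1]
  unfold concat'
  rw [hdiv, hmod]
  simp

lemma blkP_concat (i : ℕ) (ys : ℕ → ℤ → Fin k)
    (h : ∀ b, b < scf k r i → BlkP k r i (ys b)) :
    BlkP k r (i+1) (concat' k (scL k r i) (scf k r i) ys) := by
  have hL := scL_pos' k r i
  have hf := scf_pos (k := k) (r := r) i
  constructor
  · intro b hb
    have hmem : min b (scf k r i - 1) < scf k r i := by omega
    apply (blkP_congr i ?_).2 (h _ hmem)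
    intro s hs
    exact concat_eval hL ys b (by positivity) (by exact_mod_cast hs)
  · intro b hfb hb s hs
    have h0 : (0:ℤ) ≤ (s:ℤ) := by positivity
    have h1 : (s:ℤ) < scL k r i := by exact_mod_cast hs
    have e1 := concat_eval (f := scf k r i) hL ys b h0 h1
    have e2 := concat_eval (f := scf k r i) hL ys (scf k r i - 1) h0 h1
    rw [e1, e2]
    have hmm : min b (scf k r i - 1) = min (scf k r i - 1) (scf k r i - 1) := by omega
    rw [hmm]

/-- the concatenation of `f` chosen blocks (clamped) belongs to `Prefs (i+1) n` -/
lemma concat_mem_Prefs (i n : ℕ) (ys : ℕ → ℤ → Fin k)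
    (h : ∀ b, b < scf k r i → BlkP k r i (ys b)) :
    proj 0 n (concat' k (scL k r i) (scf k r i) ys) ∈ Prefs k r (i+1) n :=
  ⟨concat' k (scL k r i) (scf k r i) ys, blkP_concat i ys h, rfl⟩

lemma prefs_choose {i n : ℕ} {w : Fin n → Fin k} (hw : w ∈ Prefs k r i n) :
    ∃ y, BlkP k r i y ∧ ∀ j : Fin n, y (j : ℤ) = w j := by
  obtain ⟨y, hy, hproj⟩ := hw
  exact ⟨y, hy, fun j => by rw [← hproj]; simp [proj]⟩

instance (i n : ℕ) : Finite (Prefs k r i n) := Subtype.finite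

lemma card_prefs_step_lt (i : ℕ) {a ρ n : ℕ} (ha : a < scf k r i) (hρ : ρ ≤ scL k r i)
    (hn : n = a * scL k r i + ρ) :
    Nat.card (Prefs k r i (scL k r i)) ^ a * Nat.card (Prefs k r i ρ)
      ≤ Nat.card (Prefs k r (i+1) n) := by
  classical
  have hL := scL_pos' k r i
  have hf := scf_pos (k := k) (r := r) i
  set L := scL k r i with hLdef
  set f := scf k r i with hfdef
  -- build the map
  have key : ∀ (W : Fin a → Prefs k r i L) (Z : Prefs k r i ρ),
      ∃ y, BlkP k r (i+1) y ∧
        (∀ (b : Fin a) (j : Fin L), y ((b:ℤ) * L + j) = (W b : Fin L → Fin k) j) ∧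
        (∀ (s : Fin ρ), y ((a:ℤ) * L + s) = (Z : Fin ρ → Fin k) s) := by
    intro W Z
    choose yb hyb hybe using fun b : Fin a => prefs_choose (W b).2
    obtain ⟨z, hz, hze⟩ := prefs_choose Z.2
    set ys : ℕ → ℤ → Fin k := fun b => if h : b < a then yb ⟨b, h⟩ else z with hys
    refine ⟨concat' k L f ys, blkP_concat i ys ?_, ?_, ?_⟩
    · intro b _
      by_cases h : b < a
      · simpa [hys, h] using hyb ⟨b, h⟩
      · simpa [hys, h] using hz
    · intro b j
      have := concat_eval (f := f) hL ys b (s := (j:ℤ)) (by positivity) (by exact_mod_cast j.2)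
      rw [this]
      have hmin : min (b:ℕ) (f - 1) = (b:ℕ) := by omega
      rw [hmin]
      have hlt : (b:ℕ) < a := b.2
      simp only [hys, dif_pos hlt]
      exact hybe ⟨b, hlt⟩ ⟨j, j.2⟩ |>.trans (by congr)
    · intro s
      have hsL : (s:ℤ) < (L:ℤ) := by
        have := s.2; push_cast; omega
      have := concat_eval (f := f) hL ys a (s := (s:ℤ)) (by positivity) hsL
      rw [this]
      have hmin : min a (f - 1) = a := by omega
      rw [hmin]
      simp only [hys, dif_neg (lt_irrefl a)]
      exact hze s
  choose Y hY1 hY2 hY3 using key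
  set F : (Fin a → Prefs k r i L) × Prefs k r i ρ → Prefs k r (i+1) n :=
    fun P => ⟨proj 0 n (Y P.1 P.2), Y P.1 P.2, hY1 P.1 P.2, rfl⟩ with hF
  have hinj : Function.Injective F := by
    rintro ⟨W, Z⟩ ⟨W', Z'⟩ hWZ
    have heq : proj 0 n (Y W Z) = proj 0 n (Y W' Z') := congrArg Subtype.val hWZ
    have hev : ∀ t : ℕ, t < n → Y W Z (t : ℤ) = Y W' Z' (t : ℤ) := by
      intro t ht
      have := congrFun heq ⟨t, ht⟩
      simpa [proj] using this
    have hW : W = W' := by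
      funext b
      apply Subtype.ext
      funext j
      have hb := b.2
      have hj := j.2
      have htn : (b : ℕ) * L + (j : ℕ) < n := by
        have h1 : (b : ℕ) * L + (j : ℕ) < a * L := nat_block_lt hb hj
        omega
      have e := hev ((b : ℕ) * L + (j : ℕ)) htn
      have hcast : (((b : ℕ) * L + (j : ℕ) : ℕ) : ℤ) = ((b:ℕ):ℤ) * L + ((j:ℕ):ℤ) := by
        push_cast; ring
      rw [hcast] at e
      have e1 := hY2 W Z b j
      have e2 := hY2 W' Z' b j
      rw [← e1, ← e2, e]
    have hZ : Z = Z' := by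
      apply Subtype.ext
      funext s
      have hs := s.2
      have htn : a * L + (s : ℕ) < n ∨ a * L + (s : ℕ) ≤ n := by omega
      have htn' : a * L + (s : ℕ) < n := by omega
      have e := hev (a * L + (s : ℕ)) htn'
      have hcast : ((a * L + (s : ℕ) : ℕ) : ℤ) = (a:ℤ) * L + ((s:ℕ):ℤ) := by
        push_cast; ring
      rw [hcast] at e
      have e1 := hY3 W Z s
      have e2 := hY3 W' Z' s
      rw [← e1, ← e2, e]
    rw [Prod.ext_iff]
    exact ⟨hW, hZ⟩
  calc Nat.card (Prefs k r i L) ^ a * Nat.card (Prefs k r i ρ)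
      = Nat.card ((Fin a → Prefs k r i L) × Prefs k r i ρ) := by
        rw [Nat.card_prod, Nat.card_fun, Nat.card_eq_fintype_card (α := Fin a), Fintype.card_fin]
    _ ≤ Nat.card (Prefs k r (i+1) n) := Nat.card_le_card_of_injective F hinj

lemma card_prefs_step_ge (i : ℕ) {n : ℕ} (hfn : scf k r i * scL k r i ≤ n) :
    Nat.card (Prefs k r i (scL k r i)) ^ (scf k r i) ≤ Nat.card (Prefs k r (i+1) n) := by
  classical
  have hL := scL_pos' k r i
  have hf := scf_pos (k := k) (r := r) i
  set L := scL k r i with hLdef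
  set f := scf k r i with hfdef
  have key : ∀ (W : Fin f → Prefs k r i L),
      ∃ y, BlkP k r (i+1) y ∧
        (∀ (b : Fin f) (j : Fin L), y ((b:ℤ) * L + j) = (W b : Fin L → Fin k) j) := by
    intro W
    choose yb hyb hybe using fun b : Fin f => prefs_choose (W b).2
    set ys : ℕ → ℤ → Fin k := fun b => if h : b < f then yb ⟨b, h⟩ else yb ⟨f-1, by omega⟩
      with hys
    refine ⟨concat' k L f ys, blkP_concat i ys ?_, ?_⟩
    · intro b hb
      simp only [hys]
      split_ifs with h
      · exact hyb _
      · exact absurd hb h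
    · intro b j
      have := concat_eval (f := f) hL ys b (s := (j:ℤ)) (by positivity) (by exact_mod_cast j.2)
      rw [this]
      have hmin : min (b:ℕ) (f - 1) = (b:ℕ) := by have := b.2; omega
      rw [hmin]
      simp only [hys, dif_pos b.2]
      exact hybe _ ⟨j, j.2⟩ |>.trans (by congr)
  choose Y hY1 hY2 using key
  set F : (Fin f → Prefs k r i L) → Prefs k r (i+1) n :=
    fun W => ⟨proj 0 n (Y W), Y W, hY1 W, rfl⟩ with hF
  have hinj : Function.Injective F := by
    intro W W' hWW
    have heq : proj 0 n (Y W) = proj 0 n (Y W') := congrArg Subtype.val hWW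
    have hev : ∀ t : ℕ, t < n → Y W (t : ℤ) = Y W' (t : ℤ) := by
      intro t ht
      have := congrFun heq ⟨t, ht⟩
      simpa [proj] using this
    funext b
    apply Subtype.ext; funext j
    have htn : (b : ℕ) * L + (j : ℕ) < n := lt_of_lt_of_le (nat_block_lt b.2 j.2) hfn
    have e := hev _ htn
    have hcast : (((b : ℕ) * L + (j : ℕ) : ℕ) : ℤ) = ((b:ℕ):ℤ) * L + ((j:ℕ):ℤ) := by
      push_cast; ring
    rw [hcast] at e
    rw [← hY2 W b j, ← hY2 W' b j, e]
  calc Nat.card (Prefs k r i L) ^ f = Nat.card (Fin f → Prefs k r i L) := by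
        rw [Nat.card_fun, Nat.card_eq_fintype_card (α := Fin f), Fintype.card_fin]
    _ ≤ _ := Nat.card_le_card_of_injective F hinj

lemma card_blocks_le_step (i : ℕ) (hfm : scf k r i ≤ scm i) :
    Nat.card (Prefs k r (i+1) (scL k r (i+1)))
      ≤ Nat.card (Prefs k r i (scL k r i)) ^ (scf k r i) := by
  classical
  have hL := scL_pos' k r i
  have hf := scf_pos (k := k) (r := r) i
  set L := scL k r i with hLdef
  set f := scf k r i with hfdef
  set L' := scL k r (i+1) with hL'def
  have hLL' : L' = scm i * L := scL_succ k r i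
  have key : ∀ (w : Prefs k r (i+1) L'),
      ∃ y, BlkP k r (i+1) y ∧ ∀ t : Fin L', y ((t : ℕ) : ℤ) = (w : Fin L' → Fin k) t := by
    intro w
    obtain ⟨y, hy, hye⟩ := prefs_choose w.2
    exact ⟨y, hy, hye⟩
  choose Y hY1 hY2 using key
  set G : Prefs k r (i+1) L' → (Fin f → Prefs k r i L) :=
    fun w c => ⟨proj ((c:ℤ) * L) L (Y w),
      ⟨fun t => Y w ((c:ℤ) * L + t), (hY1 w).1 c (lt_of_lt_of_le c.2 hfm), by
        funext j
        show Y w ((c:ℤ) * L + ((0:ℤ) + j)) = Y w ((c:ℤ) * L + j)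
        norm_num⟩⟩ with hG
  have hinj : Function.Injective G := by
    intro w w' hww
    have hblk : ∀ (c : Fin f) (j : Fin L),
        Y w ((c:ℤ) * L + j) = Y w' ((c:ℤ) * L + j) := by
      intro c j
      have := congrFun (congrArg Subtype.val (congrFun hww c)) j
      simpa [hG, proj] using this
    apply Subtype.ext
    funext t
    have hyt := hY2 w t
    have hyt' := hY2 w' t
    rw [← hyt, ← hyt']
    -- decompose t = b * L + s
    set b := (t : ℕ) / L with hb
    set sNat := (t : ℕ) % L with hs
    have hsplit : (t : ℕ) = b * L + sNat := by
      rw [hb, hs, Nat.mul_comm]; exact (Nat.div_add_mod _ L).symm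
    have hsL : sNat < L := Nat.mod_lt _ hL
    have hbm : b < scm i := by
      have ht : (t:ℕ) < scm i * L := by rw [← hLL']; exact t.2
      exact (Nat.div_lt_iff_lt_mul hL).2 ht
    have hcast : (((t:ℕ) : ℕ) : ℤ) = (b:ℤ) * L + (sNat:ℤ) := by
      rw [hsplit]; push_cast; ring
    rw [hcast]
    by_cases hbf : b < f
    · exact hblk ⟨b, hbf⟩ ⟨sNat, hsL⟩
    · push_neg at hbf
      have e1 := (hY1 w).2 b hbf hbm sNat hsL
      have e2 := (hY1 w').2 b hbf hbm sNat hsL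
      rw [e1, e2]
      have hf1 : f - 1 < f := by omega
      exact hblk ⟨f-1, hf1⟩ ⟨sNat, hsL⟩
  calc Nat.card (Prefs k r (i+1) L') ≤ Nat.card (Fin f → Prefs k r i L) :=
        Nat.card_le_card_of_injective G hinj
    _ = Nat.card (Prefs k r i L) ^ f := by
        rw [Nat.card_fun, Nat.card_eq_fintype_card (α := Fin f), Fintype.card_fin]

lemma card_blocks_base_ge : k ≤ Nat.card (Prefs k r 0 (scL k r 0)) := by
  classical
  set F : Fin k → Prefs k r 0 (scL k r 0) :=
    fun c => ⟨fun _ => c, ⟨fun _ => c, trivial, rfl⟩⟩ with hF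
  have hinj : Function.Injective F := by
    intro c c' hcc
    have := congrFun (congrArg Subtype.val hcc) ⟨0, scL_pos' k r 0⟩
    simpa [hF] using this
  calc k = Nat.card (Fin k) := by rw [Nat.card_eq_fintype_card, Fintype.card_fin]
  _ ≤ _ := Nat.card_le_card_of_injective F hinj

lemma card_blocks_base_le : Nat.card (Prefs k r 0 (scL k r 0)) ≤ k := by
  calc Nat.card (Prefs k r 0 (scL k r 0)) ≤ Nat.card (Fin (scL k r 0) → Fin k) :=
        Nat.card_le_card_of_injective _ Subtype.val_injective
  _ = k := by
      rw [Nat.card_fun, Nat.card_eq_fintype_card, Nat.card_eq_fintype_card,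
        Fintype.card_fin, Fintype.card_fin, scL_zero, pow_one]

variable (hk : 2 ≤ k) (hr0 : 0 < r) (hrk : r < Real.log k)
include hk hr0 hrk

lemma card_blocks_ge (i : ℕ) : scN k r i ≤ Nat.card (Prefs k r i (scL k r i)) := by
  induction i with
  | zero => rw [scN_zero]; exact card_blocks_base_ge
  | succ i ih =>
    have hstep := card_prefs_step_ge (i := i) (n := scL k r (i+1))
      (by rw [scL_succ]; exact Nat.mul_le_mul_right _ (scf_le_scm hk hr0 hrk i))
    calc scN k r (i+1) = scN k r i ^ scf k r i := scN_succ k r i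
    _ ≤ Nat.card (Prefs k r i (scL k r i)) ^ scf k r i := Nat.pow_le_pow_left ih _
    _ ≤ _ := hstep

lemma card_blocks_le (i : ℕ) : Nat.card (Prefs k r i (scL k r i)) ≤ scN k r i := by
  induction i with
  | zero => rw [scN_zero]; exact card_blocks_base_le
  | succ i ih =>
    calc Nat.card (Prefs k r (i+1) (scL k r (i+1)))
        ≤ Nat.card (Prefs k r i (scL k r i)) ^ scf k r i :=
          card_blocks_le_step i (scf_le_scm hk hr0 hrk i)
    _ ≤ scN k r i ^ scf k r i := Nat.pow_le_pow_left ih _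
    _ = scN k r (i+1) := (scN_succ k r i).symm

lemma exp_le_card_prefs (i : ℕ) : ∀ n ≤ scL k r i, Real.exp (r * n) ≤ Nat.card (Prefs k r i n) := by
  induction i with
  | zero =>
    intro n hn
    rw [scL_zero] at hn
    interval_cases n
    · have hne : Nonempty (Prefs k r 0 0) :=
        ⟨⟨proj 0 0 (fun _ => ⟨0, by omega⟩), ⟨_, trivial, rfl⟩⟩⟩
      have hpos : 0 < Nat.card (Prefs k r 0 0) := Nat.card_pos
      have : (1:ℝ) ≤ Nat.card (Prefs k r 0 0) := by exact_mod_cast hpos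
      simpa using this
    · have hb : k ≤ Nat.card (Prefs k r 0 1) := card_blocks_base_ge
      push_cast
      rw [mul_one]
      have hexp : Real.exp r < k :=
        calc Real.exp r < Real.exp (Real.log k) := Real.exp_lt_exp.2 hrk
        _ = k := Real.exp_log (by positivity)
      have hcard : (k:ℝ) ≤ Nat.card (Prefs k r 0 1) := by exact_mod_cast hb
      linarith
  | succ i ih =>
    intro n hn
    have hL := scL_pos' k r i
    set L := scL k r i with hLdef
    set f := scf k r i with hfdef
    set a := n / L with ha
    set ρ := n % L with hρdef
    have hsplit : n = a * L + ρ := by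
      rw [ha, hρdef, Nat.mul_comm]; exact (Nat.div_add_mod _ L).symm
    have hρ : ρ < L := Nat.mod_lt _ hL
    by_cases haf : a < f
    · have hstep := card_prefs_step_lt i haf (le_of_lt hρ) hsplit
      have h1 : Real.exp (r * L) ≤ Nat.card (Prefs k r i L) := ih _ le_rfl
      have h2 : Real.exp (r * ρ) ≤ Nat.card (Prefs k r i ρ) := ih _ (le_of_lt hρ)
      calc Real.exp (r * n) = Real.exp (r * L) ^ a * Real.exp (r * ρ) := by
            rw [← Real.exp_nat_mul, ← Real.exp_add]
            congr 1
            rw [hsplit]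
            push_cast
            ring
      _ ≤ (Nat.card (Prefs k r i L) : ℝ) ^ a * Nat.card (Prefs k r i ρ) := by
            apply mul_le_mul (pow_le_pow_left₀ (Real.exp_nonneg _) h1 a) h2
              (Real.exp_nonneg _) (by positivity)
      _ = ((Nat.card (Prefs k r i L) ^ a * Nat.card (Prefs k r i ρ) : ℕ) : ℝ) := by
            push_cast; ring
      _ ≤ Nat.card (Prefs k r (i+1) n) := by exact_mod_cast hstep
    · push_neg at haf
      have hfn : f * L ≤ n := by
        calc f * L ≤ a * L := Nat.mul_le_mul_right _ haf
        _ ≤ n := by omega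
      have hstep := card_prefs_step_ge (i := i) hfn
      have hNle : (scN k r (i+1) : ℝ) ≤ Nat.card (Prefs k r (i+1) n) := by
        have h1 : scN k r (i+1) ≤ Nat.card (Prefs k r (i+1) n) := by
          calc scN k r (i+1) = scN k r i ^ f := scN_succ k r i
          _ ≤ Nat.card (Prefs k r i L) ^ f :=
              Nat.pow_le_pow_left (card_blocks_ge hk hr0 hrk i) _
          _ ≤ _ := hstep
        exact_mod_cast h1
      refine le_of_lt ?_
      calc Real.exp (r * n) ≤ Real.exp (r * scL k r (i+1)) := by
            apply Real.exp_le_exp.2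
            have : (n:ℝ) ≤ (scL k r (i+1) : ℝ) := by exact_mod_cast hn
            nlinarith
      _ < (scN k r (i+1) : ℝ) := by
            have hkey := key_lt hk hr0 hrk (i+1)
            have hN : (0:ℝ) < (scN k r (i+1) : ℝ) := by
              have := scN_two_le hk hr0 hrk (i+1); exact_mod_cast by omega
            calc Real.exp (r * scL k r (i+1)) < Real.exp (Real.log (scN k r (i+1))) :=
              Real.exp_lt_exp.2 hkey
            _ = _ := Real.exp_log hN
      _ ≤ _ := hNle

omit hk hr0 hrk in
lemma scL_ge (i : ℕ) : i ≤ scL k r i := by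
  induction i with
  | zero => omega
  | succ i ih =>
    have hL := scL_pos' k r i
    rw [scL_succ]
    have : 2 * scL k r i ≤ scm i * scL k r i :=
      Nat.mul_le_mul_right _ (by simp [scm])
    omega

variable (k r) in
/-- number of words of length `n` in the subshift -/
def cnt (n : ℕ) : ℕ := Nat.card (proj 0 n '' Lam k r)

omit hk hr0 hrk in
lemma prefs_subset_image (i n : ℕ) (hn : n ≤ scL k r i) :
    Prefs k r i n ⊆ proj 0 n '' Lam k r := by
  rintro w ⟨y, hy, rfl⟩
  refine ⟨per k r i y, per_mem_Lam hy, ?_⟩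
  funext j
  show per k r i y (0 + (j:ℤ)) = y (0 + (j:ℤ))
  have hj : ((j:ℕ):ℤ) < scL k r i := by
    have h1 := j.2
    have : (j:ℕ) < scL k r i := by omega
    exact_mod_cast this
  rw [show (0:ℤ) + (j:ℤ) = ((j:ℕ):ℤ) from by ring]
  exact per_eq_on y (by positivity) hj

lemma exp_le_cnt (n : ℕ) : Real.exp (r * n) ≤ cnt k r n := by
  have h1 := exp_le_card_prefs hk hr0 hrk n n (scL_ge n)
  have hsub := prefs_subset_image (k := k) (r := r) n n (scL_ge n)
  have h2 : Nat.card (Prefs k r n n) ≤ cnt k r n :=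
    Nat.card_mono (Set.toFinite _) hsub
  calc Real.exp (r * n) ≤ Nat.card (Prefs k r n n) := h1
  _ ≤ cnt k r n := by exact_mod_cast h2

omit hk hr0 hrk in
lemma image_proj_shift (t : ℤ) (n : ℕ) :
    proj t n '' Lam k r = proj 0 n '' Lam k r := by
  ext w
  constructor
  · rintro ⟨x, hx, rfl⟩
    refine ⟨fun s => x (s + t), Lam_shiftBy t hx, ?_⟩
    funext j
    show x (0 + (j:ℤ) + t) = x (t + (j:ℤ))
    congr 1
    ring
  · rintro ⟨x, hx, rfl⟩
    refine ⟨fun s => x (s + (-t)), Lam_shiftBy (-t) hx, ?_⟩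
    funext j
    show x (t + (j:ℤ) + (-t)) = x (0 + (j:ℤ))
    congr 1
    ring

omit hk hr0 hrk in
lemma cnt_window (t : ℤ) (n : ℕ) : Nat.card (proj t n '' Lam k r) = cnt k r n := by
  rw [image_proj_shift]
  rfl

lemma cnt_le (i n : ℕ) :
    cnt k r n ≤ scL k r i * scN k r i ^ (n / scL k r i + 2) := by
  classical
  have hL := scL_pos' k r i
  set L := scL k r i with hLdef
  set M := n / L + 2 with hMdef
  set S := proj 0 n '' Lam k r with hSdef
  have key : ∀ w : S, ∃ (x : ℤ → Fin k) (p : ℤ), x ∈ Lam k r ∧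
      (∀ j : Fin n, x ((j:ℕ) : ℤ) = (w : Fin n → Fin k) j) ∧ 0 ≤ p ∧ p < L ∧
      (∀ q : ℤ, BlkP k r i (fun m => x (p + q * L + m))) := by
    rintro ⟨w, x, hx, rfl⟩
    obtain ⟨p, hp0, hpL, hq⟩ := Set.mem_iInter.1 hx i
    exact ⟨x, p, hx, fun j => by simp [proj], hp0, hpL, hq⟩
  choose x p hmem hxe hp0 hpL hq using key
  set enc : S → Fin L × (Fin M → Prefs k r i L) := fun w =>
    (⟨(p w).toNat, by have h1 := hp0 w; have h2 := hpL w; omega⟩,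
     fun c => ⟨proj (p w + ((c:ℕ) - 1 : ℤ) * L) L (x w),
       ⟨fun m => x w (p w + ((c:ℕ) - 1 : ℤ) * L + m), hq w _, by
          funext j
          show x w (p w + ((c:ℕ) - 1 : ℤ) * L + ((0:ℤ) + j)) = _
          rw [zero_add]
          rfl⟩⟩) with henc
  have hinj : Function.Injective enc := by
    intro w w' hww
    have hp : p w = p w' := by
      have h1 : (p w).toNat = (p w').toNat := by
        have := congrArg (fun z => (z.1 : ℕ)) hww
        simpa [henc] using this
      have h2 := hp0 w
      have h3 := hp0 w'
      omega
    have hblk : ∀ (c : Fin M) (j : Fin L),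
        x w (p w + ((c:ℕ) - 1 : ℤ) * L + (j:ℤ)) =
        x w' (p w' + ((c:ℕ) - 1 : ℤ) * L + (j:ℤ)) := by
      intro c j
      have := congrFun (congrArg Subtype.val (congrFun (congrArg Prod.snd hww) c)) j
      simpa [henc, proj] using this
    apply Subtype.ext
    funext j
    rw [← hxe w j, ← hxe w' j]
    set t : ℤ := ((j:ℕ) : ℤ) with ht
    have ht0 : 0 ≤ t := by positivity
    have htn : t < n := by rw [ht]; exact_mod_cast j.2
    have hLZ : (0:ℤ) < (L:ℤ) := by exact_mod_cast hL
    set q : ℤ := (t - p w) / L with hqdef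
    set s : ℤ := (t - p w) % L with hsdef
    have hs0 : 0 ≤ s := Int.emod_nonneg _ (ne_of_gt hLZ)
    have hsL : s < L := Int.emod_lt_of_pos _ hLZ
    have hdec : t = p w + q * L + s := by
      have := Int.mul_ediv_add_emod (t - p w) L
      rw [hqdef, hsdef]
      linarith [this, mul_comm (L:ℤ) ((t - p w) / L)]
    have hq1 : -1 ≤ q := by
      rw [hqdef]
      rw [Int.le_ediv_iff_mul_le hLZ]
      have := hpL w
      linarith
    have hq2 : q ≤ ((n / L : ℕ) : ℤ) := by
      have hql : (L:ℤ) * q ≤ t - p w := by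
        have := Int.mul_ediv_add_emod (t - p w) L
        linarith [hs0, this]
      have hnd : (n:ℤ) < ((n / L : ℕ) : ℤ) * L + L := by
        have h1 : n / L * L + n % L = n := by
          rw [Nat.mul_comm]; exact Nat.div_add_mod n L
        have h2 : n % L < L := Nat.mod_lt _ hL
        have h3 : n < (n / L) * L + L := by omega
        exact_mod_cast h3
      have hlt : (L:ℤ) * q < ((n / L : ℕ) : ℤ) * L + L := by
        have := hp0 w
        linarith
      have hlt2 : (L:ℤ) * q < (L:ℤ) * (((n / L : ℕ) : ℤ) + 1) := by linarith
      have := (mul_lt_mul_iff_right₀ hLZ).1 hlt2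
      omega
    set c : ℕ := (q + 1).toNat with hcdef
    have hcM : c < M := by
      rw [hMdef, hcdef]
      omega
    have hcq : ((c:ℕ) : ℤ) - 1 = q := by
      rw [hcdef]
      omega
    have hsnat : ((s.toNat : ℕ) : ℤ) = s := Int.toNat_of_nonneg hs0
    have hsfin : s.toNat < L := by omega
    have hx1 := hblk ⟨c, hcM⟩ ⟨s.toNat, hsfin⟩
    simp only [hcq] at hx1
    rw [hsnat] at hx1
    rw [← hp] at hx1
    rw [show t = p w + q * L + s from hdec]
    exact hx1
  calc cnt k r n = Nat.card S := rfl
  _ ≤ Nat.card (Fin L × (Fin M → Prefs k r i L)) :=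
      Nat.card_le_card_of_injective enc hinj
  _ = L * Nat.card (Prefs k r i L) ^ M := by
      rw [Nat.card_prod, Nat.card_fun, Nat.card_eq_fintype_card (α := Fin L),
        Nat.card_eq_fintype_card (α := Fin M), Fintype.card_fin, Fintype.card_fin]
  _ ≤ L * scN k r i ^ M :=
      Nat.mul_le_mul_left _ (Nat.pow_le_pow_left (card_blocks_le hk hr0 hrk i) _)

lemma cnt_pos (n : ℕ) : 0 < cnt k r n := by
  have := exp_le_cnt hk hr0 hrk n
  have h1 : (0:ℝ) < cnt k r n := lt_of_lt_of_le (Real.exp_pos _) this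
  exact_mod_cast h1

lemma r_le_log_cnt (n : ℕ) : r * n ≤ Real.log (cnt k r n) := by
  have h1 := exp_le_cnt hk hr0 hrk n
  have h2 : (0:ℝ) < cnt k r n := lt_of_lt_of_le (Real.exp_pos _) h1
  calc r * n = Real.log (Real.exp (r * n)) := (Real.log_exp _).symm
  _ ≤ Real.log (cnt k r n) := Real.log_le_log (Real.exp_pos _) h1

lemma log_cnt_le (i n : ℕ) :
    Real.log (cnt k r n) ≤ Real.log (scL k r i) + 2 * Real.log (scN k r i)
      + n * sch k r i := by
  have hL := scL_pos' k r i
  have hN2 := scN_two_le hk hr0 hrk i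
  have hcle := cnt_le hk hr0 hrk i n
  have hc0 : (0:ℝ) < cnt k r n := by exact_mod_cast cnt_pos hk hr0 hrk n
  have hlogN : (0:ℝ) < Real.log (scN k r i) := logN_pos hk hr0 hrk i
  have hLR : (0:ℝ) < (scL k r i : ℝ) := by exact_mod_cast hL
  have h1 : Real.log (cnt k r n) ≤
      Real.log ((scL k r i : ℝ) * (scN k r i : ℝ) ^ (n / scL k r i + 2)) := by
    apply Real.log_le_log hc0
    exact_mod_cast hcle
  have h2 : Real.log ((scL k r i : ℝ) * (scN k r i : ℝ) ^ (n / scL k r i + 2)) =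
      Real.log (scL k r i) + ((n / scL k r i : ℕ) : ℝ) * Real.log (scN k r i)
        + 2 * Real.log (scN k r i) := by
    rw [Real.log_mul (by positivity) (by positivity), Real.log_pow]
    push_cast
    ring
  have hd : ((n / scL k r i : ℕ) : ℝ) ≤ (n : ℝ) / (scL k r i : ℝ) := Nat.cast_div_le
  have h3 : ((n / scL k r i : ℕ) : ℝ) * Real.log (scN k r i) ≤ n * sch k r i := by
    calc ((n / scL k r i : ℕ) : ℝ) * Real.log (scN k r i)
        ≤ ((n : ℝ) / (scL k r i : ℝ)) * Real.log (scN k r i) :=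
          mul_le_mul_of_nonneg_right hd hlogN.le
    _ = n * sch k r i := by rw [sch]; ring
  linarith [h1, h2.le, h3]

lemma tendsto_log_cnt (m : ℕ) :
    Filter.Tendsto (fun n : ℕ => Real.log (cnt k r (n + 2*m)) / n)
      Filter.atTop (nhds r) := by
  rw [Metric.tendsto_atTop]
  intro ε hε
  obtain ⟨i, hi⟩ := exists_sch_small hk hr0 hrk (by positivity : (0:ℝ) < ε/2)
  set C : ℝ := Real.log (scL k r i) + 2 * Real.log (scN k r i) with hC
  have hC0 : 0 ≤ C := by
    have h1 : (1:ℝ) ≤ (scL k r i : ℝ) := by exact_mod_cast scL_pos' k r i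
    have h2 : (1:ℝ) ≤ (scN k r i : ℝ) := by
      have := scN_two_le hk hr0 hrk i; exact_mod_cast by omega
    have := Real.log_nonneg h1
    have := Real.log_nonneg h2
    positivity
  have hsch0 : 0 < sch k r i := lt_trans hr0 (r_lt_sch hk hr0 hrk i)
  obtain ⟨n0, hn0⟩ := exists_nat_gt ((C + 2 * m * sch k r i) / (ε/2))
  refine ⟨max 1 (n0 + 1), fun n hn => ?_⟩
  have hn1 : 1 ≤ n := le_trans (le_max_left _ _) hn
  have hnn0 : (n0 : ℝ) < n := by
    have : n0 + 1 ≤ n := le_trans (le_max_right _ _) hn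
    exact_mod_cast by omega
  have hnR : (0:ℝ) < n := by exact_mod_cast hn1
  set n' := n + 2*m with hn'
  have hcastn' : (n' : ℝ) = (n:ℝ) + 2*m := by rw [hn']; push_cast; ring
  -- lower bound
  have hlow : r ≤ Real.log (cnt k r n') / n := by
    have h1 := r_le_log_cnt hk hr0 hrk n'
    rw [le_div_iff₀ hnR]
    have h2 : r * n ≤ r * n' := by
      apply mul_le_mul_of_nonneg_left _ hr0.le
      rw [hcastn']
      have : (0:ℝ) ≤ 2*(m:ℝ) := by positivity
      linarith
    linarith
  -- upper bound
  have hup : Real.log (cnt k r n') / n ≤ (C + 2*m*sch k r i)/n + sch k r i := by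
    have h1 := log_cnt_le hk hr0 hrk i n'
    rw [div_add' _ _ _ (ne_of_gt hnR), div_le_div_iff₀ hnR hnR]
    have h2 : Real.log (cnt k r n') * n ≤ (C + n' * sch k r i) * n := by
      apply mul_le_mul_of_nonneg_right _ hnR.le
      rw [hC]
      linarith [h1]
    calc Real.log (cnt k r n') * n ≤ (C + n' * sch k r i) * n := h2
    _ = (C + 2*m*sch k r i + sch k r i * n) * n := by rw [hcastn']; ring
  have hsmall : (C + 2*m*sch k r i)/n < ε/2 := by
    rw [div_lt_iff₀ hnR]
    have h1 : (C + 2 * m * sch k r i) / (ε/2) < n := lt_trans hn0 hnn0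
    have := (div_lt_iff₀ (by positivity : (0:ℝ) < ε/2)).1 h1
    linarith
  rw [Real.dist_eq, abs_sub_lt_iff]
  constructor
  · linarith [hup, hsmall, hi]
  · linarith [hlow, hε]

section Entropy

open Dynamics UniformSpace
open scoped Uniformity ENNReal

variable (k) in
/-- basic entourage: agreement on `[-m, m]` -/
def ent (m : ℕ) : Set ((ℤ → Fin k) × (ℤ → Fin k)) :=
  { xy | ∀ s : ℤ, -(m:ℤ) ≤ s → s ≤ (m:ℤ) → xy.1 s = xy.2 s }

omit hk hr0 hrk in
lemma fsh_iterate (j : ℕ) (x : ℤ → Fin k) : (fullShift k)^[j] x = fun n => x (n + j) := by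
  induction j generalizing x with
  | zero => simp
  | succ j ih =>
    rw [Function.iterate_succ_apply, ih]
    funext n
    show x (n + j + 1) = x (n + (j+1))
    congr 1
    push_cast
    ring

omit hk hr0 hrk in
lemma mem_dyn_iff {m n : ℕ} (hn : 1 ≤ n) (x y : ℤ → Fin k) :
    (x, y) ∈ dynEntourage (fullShift k) (ent k m) n ↔
      ∀ s : ℤ, -(m:ℤ) ≤ s → s ≤ (m:ℤ) + n - 1 → x s = y s := by
  rw [mem_dynEntourage]
  constructor
  · intro h s hs1 hs2
    set j : ℕ := (s - m).toNat with hj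
    have hjn : j < n := by omega
    have := h j hjn
    rw [fsh_iterate, fsh_iterate] at this
    have h2 := this (s - j) (by omega) (by omega)
    simpa using h2
  · intro h j hjn
    rw [fsh_iterate, fsh_iterate]
    intro s hs1 hs2
    exact h (s + j) (by omega) (by omega)

lemma coverMincard_eq (m n : ℕ) (hn : 1 ≤ n) :
    coverMincard (fullShift k) (Lam k r) (ent k m) n = (cnt k r (n + 2*m) : ℕ∞) := by
  classical
  set W : ℕ := n + 2*m with hW
  set S : Set (Fin W → Fin k) := proj (-(m:ℤ)) W '' Lam k r with hS
  have hcard : Nat.card S = cnt k r W := cnt_window (k := k) (r := r) _ _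
  have hwin : ∀ (x z : ℤ → Fin k),
      ((x, z) ∈ dynEntourage (fullShift k) (ent k m) n ↔ proj (-(m:ℤ)) W x = proj (-(m:ℤ)) W z) := by
    intro x z
    rw [mem_dyn_iff hn]
    constructor
    · intro h
      funext t
      show x (-(m:ℤ) + t) = z (-(m:ℤ) + t)
      have ht := t.2
      apply h <;> [skip; skip] <;> push_cast <;> omega
    · intro h s hs1 hs2
      have ht : ((s + m).toNat : ℤ) = s + m := by omega
      have htW : (s + m).toNat < W := by omega
      have hthis : x (-(m:ℤ) + (((s + m).toNat : ℕ) : ℤ)) =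
          z (-(m:ℤ) + (((s + m).toNat : ℕ) : ℤ)) := congrFun h ⟨(s + m).toNat, htW⟩
      have hx : -(m:ℤ) + (((s + m).toNat : ℕ) : ℤ) = s := by omega
      rw [hx] at hthis
      exact hthis
  apply le_antisymm
  · -- find a cover of cardinality cnt
    have hak : 0 < k := by omega
    have key : ∀ w : S, ∃ x, x ∈ Lam k r ∧ proj (-(m:ℤ)) W x = w := by
      rintro ⟨w, x, hx, rfl⟩
      exact ⟨x, hx, rfl⟩
    choose g hg1 hg2 using key
    haveI : Fintype S := (Set.toFinite S).fintype
    set sfin : Finset (ℤ → Fin k) := Finset.image (fun w : S => g w) Finset.univ with hsfin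
    have hcover : IsDynCoverOf (fullShift k) (Lam k r) (ent k m) n sfin := by
      intro z hz
      have hwmem : proj (-(m:ℤ)) W z ∈ S := ⟨z, hz, rfl⟩
      refine ⟨g ⟨_, hwmem⟩, ?_, ?_⟩
      · rw [hsfin, Finset.coe_image]
        exact ⟨⟨_, hwmem⟩, Finset.mem_coe.2 (Finset.mem_univ _), rfl⟩
      · show (z, g ⟨_, hwmem⟩) ∈ dynEntourage (fullShift k) (ent k m) n
        rw [hwin]
        rw [hg2 ⟨_, hwmem⟩]
    have hle := hcover.coverMincard_le_card
    refine le_trans hle ?_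
    have h1 : sfin.card ≤ Nat.card S := by
      rw [hsfin]
      calc (Finset.image (fun w : S => g w) Finset.univ).card ≤ Finset.univ.card :=
            Finset.card_image_le
      _ = Nat.card S := by rw [Finset.card_univ, Nat.card_eq_fintype_card]
    rw [hcard] at h1
    exact_mod_cast h1
  · -- every cover has at least cnt elements
    rw [coverMincard]
    refine le_iInf₂ fun sfin hsfin => ?_
    have hsub : S ⊆ proj (-(m:ℤ)) W '' (sfin : Set (ℤ → Fin k)) := by
      rintro w ⟨z, hz, rfl⟩
      obtain ⟨x, hxs, hxz⟩ := hsfin hz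
      refine ⟨x, hxs, ?_⟩
      have : (z, x) ∈ dynEntourage (fullShift k) (ent k m) n := hxz
      exact ((hwin z x).1 this).symm
    have h1 : Nat.card S ≤ Nat.card (proj (-(m:ℤ)) W '' (sfin : Set (ℤ → Fin k))) :=
      Nat.card_mono (Set.toFinite _) hsub
    have h2 : Nat.card (proj (-(m:ℤ)) W '' (sfin : Set (ℤ → Fin k))) ≤ sfin.card := by
      rw [Nat.card_coe_set_eq]
      calc (proj (-(m:ℤ)) W '' (sfin : Set (ℤ → Fin k))).ncard
          ≤ (sfin : Set (ℤ → Fin k)).ncard := Set.ncard_image_le (Set.toFinite _)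
      _ = sfin.card := Set.ncard_coe_finset _
    rw [hcard] at h1
    exact_mod_cast le_trans h1 h2

variable (k) in
/-- coordinate entourage -/
def Vi (i : ℤ) : Set ((ℤ → Fin k) × (ℤ → Fin k)) := { xy | xy.1 i = xy.2 i }

omit hk hr0 hrk in
lemma uniformity_pi :
    𝓤 (ℤ → Fin k) = ⨅ i : ℤ, Filter.principal (Vi k i) := by
  rw [Pi.uniformity]
  congr 1
  funext i
  have hbot : 𝓤 (Fin k) = Filter.principal SetRel.id := rfl
  rw [hbot, Filter.comap_principal]
  have : ((fun a : (ℤ → Fin k) × (ℤ → Fin k) => (a.1 i, a.2 i)) ⁻¹' SetRel.id) = Vi k i := by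
    ext xy
    simp [Vi, SetRel.id]
  rw [this]

omit hk hr0 hrk in
lemma hasBasis_uniformity :
    (𝓤 (ℤ → Fin k)).HasBasis (fun t : Set ℤ => t.Finite) (fun t => ⋂ i ∈ t, Vi k i) := by
  rw [uniformity_pi]
  exact Filter.hasBasis_iInf_principal_finite _

omit hk hr0 hrk in
lemma ent_mem_uniformity (m : ℕ) : ent k m ∈ 𝓤 (ℤ → Fin k) := by
  rw [(hasBasis_uniformity (k := k)).mem_iff]
  refine ⟨Set.Icc (-(m:ℤ)) m, Set.finite_Icc _ _, ?_⟩
  intro xy hxy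
  intro s hs1 hs2
  have := Set.mem_iInter₂.1 hxy s (Set.mem_Icc.2 ⟨hs1, hs2⟩)
  exact this

omit hk hr0 hrk in
lemma exists_ent_subset {t : Set ℤ} (ht : t.Finite) :
    ∃ m : ℕ, ent k m ⊆ ⋂ i ∈ t, Vi k i := by
  refine ⟨ht.toFinset.sup Int.natAbs, ?_⟩
  intro xy hxy
  apply Set.mem_iInter₂.2
  intro i hi
  have hle : i.natAbs ≤ ht.toFinset.sup Int.natAbs :=
    Finset.le_sup (ht.mem_toFinset.2 hi)
  exact hxy i (by omega) (by omega)

lemma cee_eq (m : ℕ) :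
    coverEntropyEntourage (fullShift k) (Lam k r) (ent k m) = (r : EReal) := by
  have hev : ∀ᶠ n : ℕ in Filter.atTop,
      ENNReal.log (coverMincard (fullShift k) (Lam k r) (ent k m) n : ℝ≥0∞) / (n : EReal)
        = ((Real.log (cnt k r (n + 2*m)) / n : ℝ) : EReal) := by
    filter_upwards [Filter.eventually_ge_atTop 1] with n hn
    rw [coverMincard_eq hk hr0 hrk m n hn]
    have hc := cnt_pos hk hr0 hrk (n + 2*m)
    rw [ENat.toENNReal_coe]
    rw [show ((cnt k r (n+2*m) : ℕ) : ℝ≥0∞) = ENNReal.ofReal ((cnt k r (n+2*m) : ℕ) : ℝ) from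
      (ENNReal.ofReal_natCast _).symm]
    rw [ENNReal.log_ofReal_of_pos (by exact_mod_cast hc)]
    rw [← EReal.coe_coe_eq_natCast n, ← EReal.coe_div]
  have hlim := (EReal.tendsto_coe.2 (tendsto_log_cnt hk hr0 hrk m)).limsup_eq
  exact (Filter.limsup_congr hev).trans hlim

lemma coverEntropy_Lam : coverEntropy (fullShift k) (Lam k r) = (r : EReal) := by
  apply le_antisymm
  · rw [coverEntropy_eq_iSup_basis (hasBasis_uniformity (k := k)) (fullShift k) (Lam k r)]
    apply iSup₂_le
    intro t ht
    obtain ⟨mm, hmm⟩ := exists_ent_subset (k := k) ht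
    calc coverEntropyEntourage (fullShift k) (Lam k r) (⋂ i ∈ t, Vi k i)
        ≤ coverEntropyEntourage (fullShift k) (Lam k r) (ent k mm) :=
          coverEntropyEntourage_antitone (fullShift k) (Lam k r) hmm
    _ = (r : EReal) := cee_eq hk hr0 hrk mm
  · rw [← cee_eq hk hr0 hrk 0]
    exact coverEntropyEntourage_le_coverEntropy (fullShift k) (Lam k r)
      (ent_mem_uniformity (k := k) 0)

end Entropy

end

end SubshiftIVT

/-- Intermediate value property of topological entropy for the full shift:
for any `0 < r < log k` there is a closed shift-invariant subset of `Σ_k`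
whose topological entropy is exactly `r`. -/
theorem exists_subshift_with_entropy (k : ℕ) (hk : 2 ≤ k) (r : ℝ)
    (hr0 : 0 < r) (hrk : r < Real.log k) :
    ∃ Λ : Set (ℤ → Fin k), IsClosed Λ ∧ Set.MapsTo (fullShift k) Λ Λ ∧
      coverEntropy (fullShift k) Λ = (r : EReal) := by
  refine ⟨SubshiftIVT.Lam k r, SubshiftIVT.isClosed_Lam, ?_, ?_⟩
  · intro x hx
    exact SubshiftIVT.Lam_shiftBy 1 hx
  · exact SubshiftIVT.coverEntropy_Lam hk hr0 hrk
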